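/- Let μ be a Borel probability measure on [0,1]^d with cumulative distribution function H such that H(1,…,1,x,1,…,1) = x for every x ∈ [0,1] and every coordinate position (uniform margins). Let w = (w₁,…,w_d) ∈ (0,1]^d satisfy w₁ + ⋯ + w_d = 1, and suppose there is a real number a > 0 such that H(x^{w₁},…,x^{w_d}) = x^a for all x ∈ (0,1). Then ∫_{[0,1]^d} ν_w(u) dμ(u) = a/(1+a) − c(w). -/

import Mathlib

open MeasureTheory Finset

/-- The multivariate `w`-madogram integrand
`ν_w(u) = max_i uᵢ^(1/wᵢ) − (1/d) Σᵢ uᵢ^(1/wᵢ)`. -/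
noncomputable def nuW (d : ℕ) (hd : 0 < d) (w u : Fin d → ℝ) : ℝ :=
  (Finset.univ.sup' (Finset.univ_nonempty_iff.mpr (Fin.pos_iff_nonempty.mp hd))
      fun i => u i ^ (1 / w i)) -
    (1 / (d : ℝ)) * ∑ i, u i ^ (1 / w i)

/-- Cumulative distribution function of a measure on `[0,1]^d ⊆ ℝ^d`. -/
noncomputable def cdf {d : ℕ} (μ : Measure (Fin d → ℝ)) (u : Fin d → ℝ) : ℝ :=
  (μ {v | ∀ i, v i ≤ u i}).toReal

/-- Layer-cake computation: if a nonnegative random variable `f` has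
`μ {f ≤ t} = t ^ p` for `t ∈ (0,1)` and `μ {f > t} = 0` for `t ≥ 1`, then
its expectation is `p / (1 + p)`. -/
lemma tail_helper {α : Type*} [MeasurableSpace α] (μ : Measure α) [IsProbabilityMeasure μ]
    (f : α → ℝ) (hm : Measurable f) (hf : Integrable f μ) (h0 : 0 ≤ᵐ[μ] f)
    (p : ℝ) (hp : 0 < p)
    (htail : ∀ t ∈ Set.Ioo (0:ℝ) 1, (μ {u | f u ≤ t}).toReal = t ^ p)
    (hone : ∀ t : ℝ, 1 ≤ t → μ {u | t < f u} = 0) :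
    ∫ u, f u ∂μ = p / (1 + p) := by
  rw [hf.integral_eq_integral_meas_lt h0]
  have key : Set.EqOn (fun t => (μ {u | t < f u}).toReal)
      (fun t => if t < 1 then 1 - t ^ p else 0) (Set.Ioi (0:ℝ)) := by
    intro t ht
    by_cases h1 : t < 1
    · simp only [if_pos h1]
      have hs : {u | t < f u} = {u | f u ≤ t}ᶜ := by ext u; simp [not_le]
      have hms : MeasurableSet {u | f u ≤ t} := hm measurableSet_Iic
      rw [hs, measure_compl hms (measure_ne_top μ _), measure_univ,
        ENNReal.toReal_sub_of_le prob_le_one ENNReal.one_ne_top, ENNReal.toReal_one,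
        htail t ⟨ht, h1⟩]
    · simp only [if_neg h1, hone t (not_lt.mp h1), ENNReal.toReal_zero]
  rw [setIntegral_congr_fun measurableSet_Ioi
    (by exact key : Set.EqOn (fun t => μ.real {a | t < f a}) _ _)]
  have hsplit : Set.Ioi (0:ℝ) = Set.Ioo 0 1 ∪ Set.Ici 1 :=
    (Set.Ioo_union_Ici_eq_Ioi one_pos).symm
  have hdisj : Disjoint (Set.Ioo (0:ℝ) 1) (Set.Ici 1) := by
    rw [Set.disjoint_left]
    intro x hx h2
    exact absurd hx.2 (not_lt.mpr h2)
  have hint0 : IntegrableOn (fun t : ℝ => 1 - t ^ p) (Set.Ioo 0 1) volume := by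
    have h1 : IntervalIntegrable (fun t : ℝ => t ^ p) volume 0 1 :=
      intervalIntegral.intervalIntegrable_rpow' (by linarith)
    have h2 : IntegrableOn (fun t : ℝ => t ^ p) (Set.Ioc 0 1) volume := by
      simpa [intervalIntegrable_iff_integrableOn_Ioc_of_le (zero_le_one (α := ℝ))] using h1
    exact ((integrableOn_const (C := (1:ℝ)) measure_Ioo_lt_top.ne).sub
      (h2.mono_set Set.Ioo_subset_Ioc_self))
  have hint1 : IntegrableOn (fun t : ℝ => if t < 1 then 1 - t ^ p else 0)
      (Set.Ioo 0 1) volume := by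
    refine hint0.congr_fun (fun t ht => ?_) measurableSet_Ioo
    simp [ht.2]
  have hint2 : IntegrableOn (fun t : ℝ => if t < 1 then 1 - t ^ p else 0)
      (Set.Ici 1) volume := by
    refine (integrableOn_zero (μ := volume)).congr_fun (fun t ht => ?_) measurableSet_Ici
    simp [not_lt.mpr (Set.mem_Ici.mp ht)]
  rw [hsplit, setIntegral_union hdisj measurableSet_Ici hint1 hint2]
  have hz : ∫ t in Set.Ici (1:ℝ), (if t < 1 then 1 - t ^ p else 0) = 0 := by
    rw [setIntegral_congr_fun measurableSet_Ici
      (fun t ht => by simp [not_lt.mpr (Set.mem_Ici.mp ht)] : Set.EqOn _ (fun _ => (0:ℝ)) _)]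
    simp
  have heq2 : Set.EqOn (fun t : ℝ => if t < 1 then 1 - t ^ p else 0)
      (fun t : ℝ => 1 - t ^ p) (Set.Ioo 0 1) := fun t ht => by simp [ht.2]
  rw [hz, add_zero, setIntegral_congr_fun measurableSet_Ioo heq2]
  rw [← integral_Ioc_eq_integral_Ioo, ← intervalIntegral.integral_of_le (zero_le_one (α := ℝ))]
  rw [intervalIntegral.integral_sub intervalIntegrable_const
    (intervalIntegral.intervalIntegrable_rpow' (by linarith)),
    intervalIntegral.integral_const]
  have hrp : ∫ x in (0:ℝ)..1, x ^ p = ((1:ℝ) ^ (p+1) - (0:ℝ) ^ (p+1)) / (p+1) := by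
    open intervalIntegral in exact integral_rpow (Or.inl (by linarith))
  rw [hrp, Real.one_rpow, Real.zero_rpow (by linarith)]
  have hp1 : (1:ℝ) + p ≠ 0 := by positivity
  have hp1' : p + 1 ≠ 0 := by positivity
  field_simp
  simp only [sub_zero, smul_eq_mul]
  ring

theorem madogram_value (d : ℕ) (hd : 2 ≤ d)
    (μ : Measure (Fin d → ℝ)) [IsProbabilityMeasure μ]
    (hμ : μ (Set.univ.pi fun _ : Fin d => Set.Icc (0:ℝ) 1)ᶜ = 0)
    (hmarg : ∀ i : Fin d, ∀ x ∈ Set.Icc (0:ℝ) 1,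
      cdf μ (Function.update (fun _ => (1:ℝ)) i x) = x)
    (w : Fin d → ℝ) (hw : ∀ i, 0 < w i ∧ w i ≤ 1) (hwsum : ∑ i, w i = 1)
    (a : ℝ) (ha : 0 < a)
    (hdiag : ∀ x ∈ Set.Ioo (0:ℝ) 1, cdf μ (fun i => x ^ w i) = x ^ a) :
    ∫ u, nuW d (by omega) w u ∂μ =
      a / (1 + a) - (1 / (d : ℝ)) * ∑ i, w i / (1 + w i) := by
  have hd0 : 0 < d := by omega
  have hne : (Finset.univ : Finset (Fin d)).Nonempty :=
    Finset.univ_nonempty_iff.mpr (Fin.pos_iff_nonempty.mp hd0)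
  set F : Fin d → (Fin d → ℝ) → ℝ := fun i u => u i ^ (1 / w i) with hF
  set M : (Fin d → ℝ) → ℝ := fun u => Finset.univ.sup' hne (fun i => F i u) with hM
  have hwinv : ∀ i : Fin d, 0 < 1 / w i := fun i => one_div_pos.mpr (hw i).1
  -- a.e. membership in the cube
  have hae : ∀ᵐ u ∂μ, ∀ i, u i ∈ Set.Icc (0:ℝ) 1 := by
    have h := (mem_ae_iff (μ := μ)).mpr hμ
    filter_upwards [h] with u hu
    intro i
    exact hu i (Set.mem_univ i)
  -- measurability
  have hFm : ∀ i, Measurable (F i) := fun i =>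
    (Real.continuous_rpow_const (hwinv i).le).measurable.comp (measurable_pi_apply i)
  have hMm : Measurable M := by
    have h := Finset.measurable_sup' hne (fun i _ => hFm i)
    have : M = Finset.univ.sup' hne F := by
      funext u
      rw [hM, Finset.sup'_apply]
    rwa [this]
  -- a.e. bounds
  have hFb : ∀ i, ∀ᵐ u ∂μ, 0 ≤ F i u ∧ F i u ≤ 1 := by
    intro i
    filter_upwards [hae] with u hu
    exact ⟨Real.rpow_nonneg (hu i).1 _, Real.rpow_le_one (hu i).1 (hu i).2 (hwinv i).le⟩
  have hMb : ∀ᵐ u ∂μ, 0 ≤ M u ∧ M u ≤ 1 := by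
    filter_upwards [hae] with u hu
    constructor
    · refine le_trans (Real.rpow_nonneg (hu ⟨0, hd0⟩).1 (1 / w ⟨0, hd0⟩)) ?_
      exact Finset.le_sup' (fun i => F i u) (Finset.mem_univ ⟨0, hd0⟩)
    · refine Finset.sup'_le hne _ (fun i _ => ?_)
      exact Real.rpow_le_one (hu i).1 (hu i).2 (hwinv i).le
  -- integrability
  have hFi : ∀ i, Integrable (F i) μ := by
    intro i
    refine (integrable_const (1:ℝ)).mono' (hFm i).aestronglyMeasurable ?_
    filter_upwards [hFb i] with u hu
    rw [Real.norm_eq_abs, abs_of_nonneg hu.1]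
    exact hu.2
  have hMi : Integrable M μ := by
    refine (integrable_const (1:ℝ)).mono' hMm.aestronglyMeasurable ?_
    filter_upwards [hMb] with u hu
    rw [Real.norm_eq_abs, abs_of_nonneg hu.1]
    exact hu.2
  -- tail computations for M
  have htailM : ∀ t ∈ Set.Ioo (0:ℝ) 1, (μ {u | M u ≤ t}).toReal = t ^ a := by
    intro t ht
    have hset : {u | M u ≤ t} =ᵐ[μ] {v : Fin d → ℝ | ∀ i, v i ≤ (fun i => t ^ w i) i} := by
      rw [Filter.eventuallyEq_set]
      filter_upwards [hae] with u hu
      simp only [Set.mem_setOf_eq, hM, Finset.sup'_le_iff]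
      constructor
      · intro h i
        have h' := h i (Finset.mem_univ i)
        rw [hF] at h'
        simp only [one_div] at h'
        exact (Real.rpow_inv_le_iff_of_pos (hu i).1 ht.1.le (hw i).1).mp h'
      · intro h i _
        rw [hF]
        simp only [one_div]
        exact (Real.rpow_inv_le_iff_of_pos (hu i).1 ht.1.le (hw i).1).mpr (h i)
    rw [measure_congr hset]
    exact hdiag t ht
  have honeM : ∀ t : ℝ, 1 ≤ t → μ {u | t < M u} = 0 := by
    intro t ht
    have h : ∀ᵐ u ∂μ, M u ≤ t := by
      filter_upwards [hMb] with u hu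
      exact hu.2.trans ht
    rw [Filter.eventually_iff, mem_ae_iff] at h
    convert h using 2
    ext u
    simp [not_le]
  -- tail computations for F i
  have htailF : ∀ i, ∀ t ∈ Set.Ioo (0:ℝ) 1, (μ {u | F i u ≤ t}).toReal = t ^ w i := by
    intro i t ht
    have hset : {u | F i u ≤ t} =ᵐ[μ]
        {v : Fin d → ℝ | ∀ j, v j ≤ Function.update (fun _ => (1:ℝ)) i (t ^ w i) j} := by
      rw [Filter.eventuallyEq_set]
      filter_upwards [hae] with u hu
      simp only [Set.mem_setOf_eq, hF, one_div]
      constructor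
      · intro h j
        by_cases hj : j = i
        · subst hj
          rw [Function.update_self]
          exact (Real.rpow_inv_le_iff_of_pos (hu j).1 ht.1.le (hw j).1).mp h
        · rw [Function.update_of_ne hj]
          exact (hu j).2
      · intro h
        have h' := h i
        rw [Function.update_self] at h'
        exact (Real.rpow_inv_le_iff_of_pos (hu i).1 ht.1.le (hw i).1).mpr h'
    rw [measure_congr hset]
    have hx : t ^ w i ∈ Set.Icc (0:ℝ) 1 :=
      ⟨Real.rpow_nonneg ht.1.le _, Real.rpow_le_one ht.1.le ht.2.le (hw i).1.le⟩
    exact hmarg i (t ^ w i) hx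
  have honeF : ∀ i, ∀ t : ℝ, 1 ≤ t → μ {u | t < F i u} = 0 := by
    intro i t ht
    have h : ∀ᵐ u ∂μ, F i u ≤ t := by
      filter_upwards [hFb i] with u hu
      exact hu.2.trans ht
    rw [Filter.eventually_iff, mem_ae_iff] at h
    convert h using 2
    ext u
    simp [not_le]
  -- expectations
  have hEM : ∫ u, M u ∂μ = a / (1 + a) :=
    tail_helper μ M hMm hMi (by filter_upwards [hMb] with u hu using hu.1) a ha htailM honeM
  have hEF : ∀ i, ∫ u, F i u ∂μ = w i / (1 + w i) := fun i =>
    tail_helper μ (F i) (hFm i) (hFi i)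
      (by filter_upwards [hFb i] with u hu using hu.1) (w i) (hw i).1 (htailF i) (honeF i)
  -- assemble
  have hnu : ∀ u, nuW d hd0 w u = M u - (1 / (d : ℝ)) * ∑ i, F i u := fun u => rfl
  calc ∫ u, nuW d (by omega : 0 < d) w u ∂μ
      = ∫ u, (M u - (1 / (d : ℝ)) * ∑ i, F i u) ∂μ := by
        exact integral_congr_ae (Filter.Eventually.of_forall (fun u => hnu u))
    _ = (∫ u, M u ∂μ) - ∫ u, (1 / (d : ℝ)) * ∑ i, F i u ∂μ := by
        exact integral_sub hMi ((integrable_finset_sum _ (fun i _ => hFi i)).const_mul _)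
    _ = (∫ u, M u ∂μ) - (1 / (d : ℝ)) * ∫ u, ∑ i, F i u ∂μ := by
        rw [integral_const_mul]
    _ = a / (1 + a) - (1 / (d : ℝ)) * ∑ i, w i / (1 + w i) := by
        rw [hEM, integral_finset_sum _ (fun i _ => hFi i)]
        congr 1
        congr 1
        exact Finset.sum_congr rfl (fun i _ => hEF i)
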